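/- Let κ be an infinite cardinal and let Clop(2^κ) be the Boolean algebra of clopen subsets of the product space 2^κ (functions from κ to the two-point discrete space, with the product topology), ordered by inclusion. Then every ultrafilter U on Clop(2^κ) satisfies (U,⊇) ≡_T ([κ]^{<ω},⊆). -/

import Mathlib

open Cardinal

/-- A subset `X` of a preorder is cofinal if every element has an upper bound in `X`. -/
def TCofinal {P : Type*} [Preorder P] (X : Set P) : Prop :=
  ∀ p : P, ∃ x ∈ X, p ≤ x

/-- A map is cofinal if it sends cofinal sets to cofinal sets. -/
def TCofinalMap {P Q : Type*} [Preorder P] [Preorder Q] (f : P → Q) : Prop :=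
  ∀ X : Set P, TCofinal X → TCofinal (f '' X)

/-- `P ≤_T Q`: there is a cofinal map from `Q` to `P`. -/
def TukeyLE (P Q : Type*) [Preorder P] [Preorder Q] : Prop :=
  ∃ f : Q → P, TCofinalMap f

/-- Tukey equivalence. -/
def TukeyEquiv (P Q : Type*) [Preorder P] [Preorder Q] : Prop :=
  TukeyLE P Q ∧ TukeyLE Q P

/-- An ultrafilter on a Boolean algebra `B` of subsets of `X` (a field of sets):
a subset of `B` omitting `∅`, closed under intersection, upward closed in `B`, and
containing `s` or `sᶜ` for each `s ∈ B`; regarded as the partial order `(U,⊇)`. -/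
structure SetUltrafilter {X : Type*} (B : Set (Set X)) where
  carrier : Set (Set X)
  subset_alg : carrier ⊆ B
  empty_not_mem : ∅ ∉ carrier
  inter_mem : ∀ a ∈ carrier, ∀ b ∈ carrier, a ∩ b ∈ carrier
  up_closed : ∀ a ∈ carrier, ∀ b ∈ B, a ⊆ b → b ∈ carrier
  mem_or_compl_mem : ∀ b ∈ B, b ∈ carrier ∨ bᶜ ∈ carrier

/-- Auxiliary: a monotone map with cofinal range is a cofinal map. -/
lemma tukeyLE_of_monotone {P Q : Type*} [Preorder P] [Preorder Q] (f : Q → P)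
    (hm : Monotone f) (hc : ∀ p : P, ∃ q : Q, p ≤ f q) : TukeyLE P Q := by
  refine ⟨f, fun X hX p => ?_⟩
  obtain ⟨q, hq⟩ := hc p
  obtain ⟨x, hxX, hqx⟩ := hX q
  exact ⟨f x, ⟨x, hxX, rfl⟩, hq.trans (hm hqx)⟩

/-- Every clopen subset of a product of discrete `Bool`s has a finite support. -/
lemma exists_finite_support {ι : Type*} {s : Set (ι → Bool)} (hs : IsClopen s) :
    ∃ F : Finset ι, ∀ p q : ι → Bool, (∀ a ∈ F, p a = q a) → p ∈ s → q ∈ s := by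
  have hcomp : IsCompact s := hs.isClosed.isCompact
  have key : ∀ x ∈ s, ∃ F : Finset ι, {q : ι → Bool | ∀ a ∈ F, q a = x a} ⊆ s := by
    intro x hx
    have hmem : s ∈ nhds x := hs.isOpen.mem_nhds hx
    rw [nhds_pi, Filter.mem_pi] at hmem
    obtain ⟨I, hI, t, ht, hsub⟩ := hmem
    refine ⟨hI.toFinset, fun q hq => hsub fun i hi => ?_⟩
    have hqi : q i = x i := hq i (hI.mem_toFinset.mpr hi)
    rw [hqi]
    have := ht i
    rwa [nhds_discrete, Filter.mem_pure] at this
  classical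
  choose! F hF using key
  set Ux : (ι → Bool) → Set (ι → Bool) := fun x => {q : ι → Bool | ∀ a ∈ F x, q a = x a}
    with hUx
  have hnhds : ∀ x ∈ s, Ux x ∈ nhds x := by
    intro x _
    have hopen : IsOpen (Ux x) := by
      have hEq : Ux x = (↑(F x) : Set ι).pi (fun i => {x i}) := by
        ext q; simp [hUx, Set.mem_pi]
      rw [hEq]
      exact isOpen_set_pi (F x).finite_toSet (fun _ _ => isOpen_discrete _)
    exact hopen.mem_nhds (fun a _ => rfl)
  obtain ⟨T, hTs, hcover⟩ := hcomp.elim_nhds_subcover Ux hnhds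
  refine ⟨T.biUnion F, fun p q hpq hp => ?_⟩
  have hp' := hcover hp
  simp only [Set.mem_iUnion, exists_prop] at hp'
  obtain ⟨x, hxT, hpx⟩ := hp'
  refine hF x (hTs x hxT) ?_
  intro a ha
  have hpa : p a = q a := hpq a (Finset.mem_biUnion.mpr ⟨x, hxT, ha⟩)
  rw [← hpa]
  exact hpx a ha


/-- For an infinite cardinal `κ`, every ultrafilter on the Boolean algebra
`Clop(2^κ)` of clopen subsets of the product space `2^κ` (here `κ.ord.ToType → Bool`
with the product topology) satisfies `(U,⊇) ≡_T ([κ]^{<ω},⊆)`. -/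
theorem stmt3 (κ : Cardinal) (hκ : ℵ₀ ≤ κ)
    (U : SetUltrafilter {s : Set (κ.ord.ToType → Bool) | IsClopen s}) :
    TukeyEquiv ((↥U.carrier)ᵒᵈ) (Finset κ.ord.ToType) := by
  classical
  have hne : ∀ u ∈ U.carrier, (u : Set (κ.ord.ToType → Bool)).Nonempty := by
    intro u hu
    rcases Set.eq_empty_or_nonempty u with h | h
    · exact absurd (h ▸ hu) U.empty_not_mem
    · exact h
  have hbit : ∀ α : κ.ord.ToType, ∃ c : Bool,
      {p : κ.ord.ToType → Bool | p α = c} ∈ U.carrier := by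
    intro α
    have hclop : IsClopen {p : κ.ord.ToType → Bool | p α = true} :=
      (isClopen_discrete {true}).preimage (continuous_apply α)
    rcases U.mem_or_compl_mem _ hclop with h | h
    · exact ⟨true, h⟩
    · refine ⟨false, ?_⟩
      convert h using 1
      ext p
      simp only [Set.mem_setOf_eq, Set.mem_compl_iff, Bool.not_eq_true]
  choose b hb using hbit
  set C : Finset κ.ord.ToType → Set (κ.ord.ToType → Bool) :=
    fun F => {p : κ.ord.ToType → Bool | ∀ a ∈ F, p a = b a} with hC
  have hCmem : ∀ F : Finset κ.ord.ToType, C F ∈ U.carrier := by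
    intro F
    induction F using Finset.induction with
    | empty =>
        have huniv : (Set.univ : Set (κ.ord.ToType → Bool)) ∈ U.carrier := by
          rcases U.mem_or_compl_mem Set.univ isClopen_univ with h | h
          · exact h
          · rw [Set.compl_univ] at h; exact absurd h U.empty_not_mem
        have hEq : C ∅ = Set.univ := by ext p; simp [hC]
        rw [hEq]; exact huniv
    | @insert a F ha ih =>
        have hEq : C (insert a F) = {p : κ.ord.ToType → Bool | p a = b a} ∩ C F := by
          ext p; simp [hC]
        rw [hEq]
        exact U.inter_mem _ (hb a) _ ih
  have hsupp : ∀ u : ↥U.carrier, ∃ F : Finset κ.ord.ToType,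
      ∀ p q : κ.ord.ToType → Bool, (∀ a ∈ F, p a = q a) → p ∈ u.1 → q ∈ u.1 :=
    fun u => exists_finite_support (U.subset_alg u.2)
  choose Fs hFs using hsupp
  have hkey : ∀ u : ↥U.carrier, C (Fs u) ⊆ u.1 := by
    intro u q hq
    have hint : u.1 ∩ C (Fs u) ∈ U.carrier := U.inter_mem _ u.2 _ (hCmem _)
    obtain ⟨p, hp, hpC⟩ := hne _ hint
    refine hFs u p q (fun a ha => ?_) hp
    rw [hpC a ha, hq a ha]
  constructor
  · refine tukeyLE_of_monotone
      (fun F => OrderDual.toDual (⟨C F, hCmem F⟩ : ↥U.carrier)) ?_ ?_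
    · intro F G hFG
      show C G ⊆ C F
      intro p hp a ha
      exact hp a (hFG ha)
    · intro u
      exact ⟨Fs (OrderDual.ofDual u), hkey _⟩
  · refine ⟨fun u => Fs (OrderDual.ofDual u), fun X hX G => ?_⟩
    obtain ⟨x, hxX, hx⟩ := hX (OrderDual.toDual (⟨C G, hCmem G⟩ : ↥U.carrier))
    have hxsub : (OrderDual.ofDual x).1 ⊆ C G := hx
    refine ⟨Fs (OrderDual.ofDual x), ⟨x, hxX, rfl⟩, ?_⟩
    intro α hα
    by_contra hαF
    obtain ⟨p, hp⟩ := hne _ (OrderDual.ofDual x).2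
    set q : κ.ord.ToType → Bool := Function.update p α (!(p α)) with hq
    have hqmem : q ∈ (OrderDual.ofDual x).1 := by
      refine hFs (OrderDual.ofDual x) p q (fun a ha => ?_) hp
      have hne' : a ≠ α := fun h => hαF (h ▸ ha)
      exact (Function.update_of_ne hne' _ p).symm
    have h1 : q α = b α := hxsub hqmem α hα
    have h2 : p α = b α := hxsub hp α hα
    have h3 : q α = !(p α) := by simp [hq]
    rw [h1, h2] at h3
    exact Bool.not_ne_self _ h3.symm
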